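/- Let q be a prime power with q > (r+d)·C(n, ⌊n/2⌋) (where C(n,m) denotes the binomial coefficient) and let r < k. If there exists a linear LRC over F_q with parameters (n, k, d, r, δ), then there exists a linear LRC over F_q with parameters (n+1, k+1, d, r+1, δ). -/

import Mathlib

/-- A linear locally repairable code (LRC) over a finite field `F` with parameters
`(n, k, d, r, δ)`: a `k`-dimensional subspace `C ⊆ F^n` whose minimum Hamming distance
is exactly `d`, such that every coordinate `j` has a repair set `S` with `j ∈ S`,
`|S| ≤ r + δ - 1`, and the projection of `C` to the coordinates in `S` has minimum
Hamming distance at least `δ`. -/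
def IsLinearLRC (F : Type) [Field F] [Fintype F] [DecidableEq F]
    (n k d r δ : ℕ) : Prop :=
  ∃ C : Submodule F (Fin n → F),
    Module.finrank F ↥C = k ∧
    (∀ c ∈ C, c ≠ 0 → d ≤ hammingNorm c) ∧
    (∃ c ∈ C, c ≠ 0 ∧ hammingNorm c = d) ∧
    (∀ j : Fin n, ∃ S : Finset (Fin n), j ∈ S ∧ S.card ≤ r + δ - 1 ∧
      ∀ c ∈ C, ∀ c' ∈ C, (∃ i ∈ S, c i ≠ c' i) →
        δ ≤ (S.filter (fun i => c i ≠ c' i)).card)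

/-- The Singleton-type bound `d_opt(n,k,r,δ) = n - k - (⌈k/r⌉ - 1)(δ - 1) + 1`,
computed in `ℤ`, where `⌈k/r⌉ = (k + r - 1) / r`. -/
def doptZ (n k r δ : ℕ) : ℤ :=
  (n : ℤ) - k - ((((k + r - 1) / r : ℕ) : ℤ) - 1) * ((δ : ℤ) - 1) + 1


open Finset

set_option linter.unusedSectionVars false
set_option linter.unusedVariables false
set_option maxHeartbeats 1000000

section aux

variable {F : Type} [Field F] [Fintype F] [DecidableEq F] {n : ℕ}

private lemma snoc_add (u u' : Fin n → F) (b b' : F) :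
    (Fin.snoc u b : Fin (n+1) → F) + (Fin.snoc u' b' : Fin (n+1) → F)
      = (Fin.snoc (u + u') (b + b') : Fin (n+1) → F) := by
  funext i
  refine Fin.lastCases ?_ (fun i => ?_) i <;> simp

private lemma snoc_smul (a : F) (u : Fin n → F) (b : F) :
    a • (Fin.snoc u b : Fin (n+1) → F) = (Fin.snoc (a • u) (a * b) : Fin (n+1) → F) := by
  funext i
  refine Fin.lastCases ?_ (fun i => ?_) i <;> simp

private lemma card_filter_succ (P : Fin (n+1) → Prop) [DecidablePred P] :
    (univ.filter P).card
      = (univ.filter fun i : Fin n => P i.castSucc).card + (if P (Fin.last n) then 1 else 0) := by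
  rw [Finset.card_filter, Finset.card_filter, Fin.sum_univ_castSucc]

private lemma card_bad_le (P : (Fin n → F) → Prop) [DecidablePred P] (t0 : Fin n)
    (h : ∀ x y, P x → P y → (∀ i, i ≠ t0 → x i = y i) → x t0 = y t0) :
    (univ.filter P).card ≤ Fintype.card F ^ (n - 1) := by
  have hc : Fintype.card ({i : Fin n // i ≠ t0} → F) = Fintype.card F ^ (n-1) := by
    rw [Fintype.card_fun]
    congr 1
    rw [Fintype.card_subtype_compl, Fintype.card_subtype_eq, Fintype.card_fin]
  calc (univ.filter P).card ≤ (univ : Finset ({i : Fin n // i ≠ t0} → F)).card := by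
        apply card_le_card_of_injOn (fun x (i : {i : Fin n // i ≠ t0}) => x i.1)
          (fun x _ => mem_univ _)
        intro x hx y hy hxy
        simp only [coe_filter, Set.mem_setOf_eq] at hx hy
        funext i
        by_cases hi : i = t0
        · subst hi; exact h x y hx.2 hy.2 (fun i hi => congrFun hxy ⟨i, hi⟩)
        · exact congrFun hxy ⟨i, hi⟩
    _ = _ := by rw [card_univ, hc]

private lemma hammingNorm_snoc (c : Fin n → F) (a : F) :
    hammingNorm (Fin.snoc c a : Fin (n+1) → F) = hammingNorm c + if a = 0 then 0 else 1 := by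
  show (univ.filter fun i : Fin (n+1) => (Fin.snoc c a : Fin (n+1) → F) i ≠ 0).card = _
  rw [card_filter_succ]
  simp only [Fin.snoc_castSucc, Fin.snoc_last]
  congr 1
  by_cases ha : a = 0 <;> simp [ha, hammingNorm]

end aux

theorem stmt_1 (F : Type) [Field F] [Fintype F] [DecidableEq F]
    (n k d r δ : ℕ) (hr : 1 ≤ r) (hδ : 2 ≤ δ) (hrk : r < k)
    (hq : (r + d) * Nat.choose n (n / 2) < Fintype.card F)
    (h : IsLinearLRC F n k d r δ) :
    IsLinearLRC F (n + 1) (k + 1) d (r + 1) δ := by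
  classical
  obtain ⟨C, hk, hd, ⟨w0, hw0C, hw0ne, hw0d⟩, hloc⟩ := h
  choose S hjS hScard hSloc using hloc
  set q := Fintype.card F with hqdef
  set Cn := Nat.choose n (n / 2) with hCndef
  -- the set of "dead" coordinates
  set Dead : Finset (Fin n) := univ.filter (fun j => ∀ c ∈ C, c j = 0) with hDeaddef
  have hDead0 : ∀ j ∈ Dead, ∀ c ∈ C, c j = 0 := by
    intro j hj; exact (mem_filter.mp hj).2
  have hlive : ∀ j, j ∉ Dead → ∃ c ∈ C, c j ≠ 0 := by
    intro j hj
    by_contra hcon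
    push_neg at hcon
    exact hj (mem_filter.mpr ⟨mem_univ _, hcon⟩)
  -- a live coordinate j0
  obtain ⟨j0, hj0⟩ : ∃ j, w0 j ≠ 0 := Function.ne_iff.mp hw0ne
  have hj0live : j0 ∉ Dead := fun hc => hj0 (hDead0 j0 hc w0 hw0C)
  -- filters of codeword differences ignore dead coordinates
  have hfiltersd : ∀ (s : Finset (Fin n)) (c₁ : Fin n → F), c₁ ∈ C → ∀ c₂ : Fin n → F, c₂ ∈ C →
      (s.filter fun i => c₁ i ≠ c₂ i) = ((s \ Dead).filter fun i => c₁ i ≠ c₂ i) := by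
    intro s c₁ h₁ c₂ h₂
    ext i
    simp only [mem_filter, mem_sdiff]
    constructor
    · rintro ⟨hi, hne⟩
      exact ⟨⟨hi, fun hid => hne ((hDead0 i hid c₁ h₁).trans (hDead0 i hid c₂ h₂).symm)⟩, hne⟩
    · tauto
  set Sd : Fin n → Finset (Fin n) := fun j => S j \ Dead with hSddef
  have hSdsub : ∀ j, Sd j ⊆ S j := fun j => sdiff_subset
  have hSdcard : ∀ j, j ∉ Dead → δ ≤ (Sd j).card := by
    intro j hj
    obtain ⟨c, hc, hcj⟩ := hlive j hj
    have h1 := hSloc j c hc 0 (zero_mem C) ⟨j, hjS j, by simpa using hcj⟩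
    calc δ ≤ ((S j).filter fun i => c i ≠ (0 : Fin n → F) i).card := h1
      _ = ((Sd j).filter fun i => c i ≠ (0 : Fin n → F) i).card := by
          rw [hfiltersd (S j) c hc 0 (zero_mem C)]
      _ ≤ (Sd j).card := card_filter_le _ _
  -- δ ≤ d and d ≤ n, 2 ≤ n
  have hdδ : δ ≤ d := by
    have h1 := hSloc j0 w0 hw0C 0 (zero_mem C) ⟨j0, hjS j0, by simpa using hj0⟩
    calc δ ≤ ((S j0).filter fun i => w0 i ≠ (0 : Fin n → F) i).card := h1
      _ ≤ (univ.filter fun i => w0 i ≠ (0 : Fin n → F) i).card :=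
          card_le_card (filter_subset_filter _ (subset_univ _))
      _ = hammingNorm w0 := by simp [hammingNorm]
      _ = d := hw0d
  have hd2 : 2 ≤ d := le_trans hδ hdδ
  have hdn : d ≤ n := by
    rw [← hw0d]
    calc hammingNorm w0 ≤ Fintype.card (Fin n) := hammingNorm_le_card_fintype
      _ = n := Fintype.card_fin n
  have hkn : k ≤ n := by
    rw [← hk]
    have h1 := Submodule.finrank_le C
    rwa [Module.finrank_fintype_fun_eq_card, Fintype.card_fin] at h1
  have hn2 : 2 ≤ n := le_trans (by omega) hkn
  have hnCn : n ≤ Cn := by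
    have := Nat.choose_le_middle 1 n
    simpa [hCndef] using this
  have hCn1 : 1 ≤ Cn := le_trans (by omega) hnCn
  -- size parameter for local constraint sets
  set m : Fin n → ℕ := fun j => (Sd j).card - δ + 2 with hmdef
  -- families of constraint sets
  set Tloc : Finset (Finset (Fin n)) :=
    (univ.filter fun j => j ∉ Dead).biUnion (fun j => powersetCard (m j) (Sd j)) with hTlocdef
  set Tdist : Finset (Finset (Fin n)) := powersetCard (n - d + 2) univ with hTdistdef
  set 𝒯 : Finset (Finset (Fin n)) := Tloc ∪ Tdist with h𝒯def
  -- every constraint set is "nice"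
  have hTnice : ∀ T ∈ 𝒯, ∃ t0 ∈ T, ∀ c ∈ C, ∀ c' ∈ C,
      (∀ i ∈ T, i ≠ t0 → c i = c' i) → c t0 = c' t0 := by
    intro T hT
    rcases mem_union.mp hT with hT | hT
    · -- local family
      obtain ⟨j, hjmem, hTj⟩ := mem_biUnion.mp hT
      have hjlive : j ∉ Dead := (mem_filter.mp hjmem).2
      obtain ⟨hTsub, hTcard⟩ := mem_powersetCard.mp hTj
      have hδSd : δ ≤ (Sd j).card := hSdcard j hjlive
      have hmj : m j = (Sd j).card - δ + 2 := rfl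
      have hTpos : 0 < T.card := by rw [hTcard]; omega
      obtain ⟨t0, ht0⟩ := card_pos.mp hTpos
      refine ⟨t0, ht0, ?_⟩
      intro c hc c' hc' hagree
      by_contra hne
      have h1 := hSloc j c hc c' hc' ⟨t0, hSdsub j (hTsub ht0), hne⟩
      have h2 : ((S j).filter fun i => c i ≠ c' i).card ≤ (Sd j).card - (T.card - 1) := by
        rw [hfiltersd (S j) c hc c' hc']
        have hsub : ((Sd j).filter fun i => c i ≠ c' i) ⊆ (Sd j) \ (T.erase t0) := by
          intro i hi
          obtain ⟨hiSd, hine⟩ := mem_filter.mp hi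
          exact mem_sdiff.mpr ⟨hiSd, fun hiT =>
            hine (hagree i (mem_of_mem_erase hiT) (ne_of_mem_erase hiT))⟩
        calc ((Sd j).filter fun i => c i ≠ c' i).card ≤ ((Sd j) \ (T.erase t0)).card :=
              card_le_card hsub
          _ = (Sd j).card - (T.erase t0).card :=
              card_sdiff_of_subset ((erase_subset _ _).trans hTsub)
          _ = (Sd j).card - (T.card - 1) := by rw [card_erase_of_mem ht0]
      have hm : T.card = (Sd j).card - δ + 2 := hTcard.trans hmj
      omega
    · -- distance family
      obtain ⟨hTsub, hTcard⟩ := mem_powersetCard.mp hT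
      have hTpos : 0 < T.card := by rw [hTcard]; omega
      obtain ⟨t0, ht0⟩ := card_pos.mp hTpos
      refine ⟨t0, ht0, ?_⟩
      intro c hc c' hc' hagree
      by_contra hne
      have hsubne : c - c' ≠ 0 := by
        intro hcc
        exact hne (by rw [sub_eq_zero] at hcc; rw [hcc])
      have h1 := hd (c - c') (sub_mem hc hc') hsubne
      have h2 : hammingNorm (c - c') ≤ n - (T.card - 1) := by
        have hnorm : hammingNorm (c - c') = (univ.filter fun i => c i ≠ c' i).card := by
          simp [hammingNorm, sub_ne_zero]
        rw [hnorm]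
        have hsub : (univ.filter fun i => c i ≠ c' i) ⊆ univ \ (T.erase t0) := by
          intro i hi
          have hine := (mem_filter.mp hi).2
          exact mem_sdiff.mpr ⟨mem_univ _, fun hiT =>
            hine (hagree i (mem_of_mem_erase hiT) (ne_of_mem_erase hiT))⟩
        calc (univ.filter fun i => c i ≠ c' i).card ≤ (univ \ (T.erase t0)).card :=
              card_le_card hsub
          _ = n - (T.erase t0).card := by rw [card_sdiff_of_subset (subset_univ _), card_univ, Fintype.card_fin]
          _ = n - (T.card - 1) := by rw [card_erase_of_mem ht0]
      omega
  -- Bad sets of candidate vectors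
  set Bad1 : Finset (Fin n → F) :=
    Dead.biUnion (fun j => univ.filter fun x => x j = 0) with hBad1def
  set Bad2 : Finset (Fin n → F) :=
    𝒯.biUnion (fun T => univ.filter fun x => ∃ c ∈ C, ∀ i ∈ T, x i = c i) with hBad2def
  have hq0 : 0 < q := Fintype.card_pos
  have hBad1card : Bad1.card ≤ n * q ^ (n - 1) := by
    calc Bad1.card ≤ ∑ j ∈ Dead, (univ.filter fun x : Fin n → F => x j = 0).card :=
        card_biUnion_le
      _ ≤ Dead.card * q ^ (n - 1) := by
          rw [← smul_eq_mul]
          apply sum_le_card_nsmul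
          intro j hj
          exact card_bad_le _ j (fun x y hx hy _ => hx.trans hy.symm)
      _ ≤ n * q ^ (n - 1) := by
          apply Nat.mul_le_mul_right
          calc Dead.card ≤ (univ : Finset (Fin n)).card := card_le_card (subset_univ _)
            _ = n := by rw [card_univ, Fintype.card_fin]
  have h𝒯card : 𝒯.card ≤ (r + 1) * Cn := by
    have hTloccard : Tloc.card ≤ r * Cn := by
      have hsub : Tloc ⊆ (Finset.Icc 2 (r+1)).biUnion (fun mm => powersetCard mm univ) := by
        intro T hT
        obtain ⟨j, hjmem, hTj⟩ := mem_biUnion.mp hT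
        have hjlive : j ∉ Dead := (mem_filter.mp hjmem).2
        obtain ⟨hTsub, hTcard⟩ := mem_powersetCard.mp hTj
        have hmj : m j = (Sd j).card - δ + 2 := rfl
        have hδSd : δ ≤ (Sd j).card := hSdcard j hjlive
        have hSdle : (Sd j).card ≤ r + δ - 1 := le_trans (card_le_card (hSdsub j)) (hScard j)
        apply mem_biUnion.mpr
        refine ⟨T.card, mem_Icc.mpr ⟨?_, ?_⟩, mem_powersetCard.mpr ⟨subset_univ _, rfl⟩⟩
        · rw [hTcard]; omega
        · rw [hTcard]; omega
      calc Tloc.card ≤ ((Finset.Icc 2 (r+1)).biUnion (fun mm => powersetCard mm univ)).card :=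
            card_le_card hsub
        _ ≤ ∑ mm ∈ Finset.Icc 2 (r+1), (powersetCard mm (univ : Finset (Fin n))).card :=
            card_biUnion_le
        _ ≤ (Finset.Icc 2 (r+1)).card * Cn := by
            rw [← smul_eq_mul]
            apply sum_le_card_nsmul
            intro mm _
            rw [card_powersetCard, card_univ, Fintype.card_fin]
            exact Nat.choose_le_middle mm n
        _ ≤ r * Cn := by
            apply Nat.mul_le_mul_right
            rw [Nat.card_Icc]
            omega
    have hTdistcard : Tdist.card ≤ Cn := by
      rw [hTdistdef, card_powersetCard, card_univ, Fintype.card_fin]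
      exact Nat.choose_le_middle _ n
    calc 𝒯.card ≤ Tloc.card + Tdist.card := card_union_le _ _
      _ ≤ r * Cn + Cn := Nat.add_le_add hTloccard hTdistcard
      _ = (r + 1) * Cn := by ring
  have hBad2card : Bad2.card ≤ ((r + 1) * Cn) * q ^ (n - 1) := by
    calc Bad2.card
        ≤ ∑ T ∈ 𝒯, (univ.filter fun x : Fin n → F => ∃ c ∈ C, ∀ i ∈ T, x i = c i).card :=
        card_biUnion_le
      _ ≤ 𝒯.card * q ^ (n - 1) := by
          rw [← smul_eq_mul]
          apply sum_le_card_nsmul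
          intro T hT
          obtain ⟨t0, ht0, hnice⟩ := hTnice T hT
          apply card_bad_le _ t0
          rintro x y ⟨c, hc, hxc⟩ ⟨c', hc', hyc'⟩ hagree
          have hcc' : c t0 = c' t0 := by
            apply hnice c hc c' hc'
            intro i hiT hit
            rw [← hxc i hiT, ← hyc' i hiT]
            exact hagree i hit
          rw [hxc t0 ht0, hyc' t0 ht0, hcc']
      _ ≤ ((r + 1) * Cn) * q ^ (n - 1) := Nat.mul_le_mul_right _ h𝒯card
  -- there is a good vector x
  obtain ⟨x, hxBad1, hxBad2⟩ : ∃ x : Fin n → F, x ∉ Bad1 ∧ x ∉ Bad2 := by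
    by_contra hcon
    push_neg at hcon
    have hsub : (univ : Finset (Fin n → F)) ⊆ Bad1 ∪ Bad2 := by
      intro x _
      rcases Classical.em (x ∈ Bad1) with hx | hx
      · exact mem_union_left _ hx
      · exact mem_union_right _ (hcon x hx)
    have hcard : q ^ n ≤ (Bad1 ∪ Bad2).card := by
      calc q ^ n = Fintype.card (Fin n → F) := by
            rw [Fintype.card_fun, Fintype.card_fin]
        _ = (univ : Finset (Fin n → F)).card := card_univ.symm
        _ ≤ (Bad1 ∪ Bad2).card := card_le_card hsub
    have hlt : (Bad1 ∪ Bad2).card < q ^ n := by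
      calc (Bad1 ∪ Bad2).card ≤ Bad1.card + Bad2.card := card_union_le _ _
        _ ≤ n * q ^ (n-1) + ((r + 1) * Cn) * q ^ (n - 1) := Nat.add_le_add hBad1card hBad2card
        _ ≤ Cn * q ^ (n-1) + ((r + 1) * Cn) * q ^ (n - 1) :=
            Nat.add_le_add_right (Nat.mul_le_mul_right _ hnCn) _
        _ = ((r + 2) * Cn) * q ^ (n-1) := by ring
        _ ≤ ((r + d) * Cn) * q ^ (n-1) := by
            apply Nat.mul_le_mul_right
            apply Nat.mul_le_mul_right
            omega
        _ < q * q ^ (n-1) := by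
            exact mul_lt_mul_of_pos_right hq (pow_pos hq0 _)
        _ = q ^ n := by
            rw [← pow_succ']
            congr 1
            omega
    omega
  -- properties of the good vector x
  have G1 : ∀ j ∈ Dead, x j ≠ 0 := by
    intro j hj hxj
    exact hxBad1 (mem_biUnion.mpr ⟨j, hj, mem_filter.mpr ⟨mem_univ _, hxj⟩⟩)
  have G2 : ∀ T ∈ 𝒯, ∀ c ∈ C, ∃ i ∈ T, x i ≠ c i := by
    intro T hT c hc
    by_contra hcon
    push_neg at hcon
    exact hxBad2 (mem_biUnion.mpr ⟨T, hT, mem_filter.mpr ⟨mem_univ _, c, hc, hcon⟩⟩)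
  have P2 : ∀ j, j ∉ Dead → ∀ c ∈ C, δ - 1 ≤ ((Sd j).filter fun i => x i ≠ c i).card := by
    intro j hj c hc
    by_contra hcon
    push_neg at hcon
    have hδSd : δ ≤ (Sd j).card := hSdcard j hj
    have hmj : m j = (Sd j).card - δ + 2 := rfl
    have hA : m j ≤ ((Sd j) \ ((Sd j).filter fun i => x i ≠ c i)).card := by
      rw [card_sdiff_of_subset (filter_subset _ _)]
      omega
    obtain ⟨T, hTA, hTcard⟩ := exists_subset_card_eq hA
    have hT𝒯 : T ∈ 𝒯 := by
      apply mem_union_left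
      exact mem_biUnion.mpr ⟨j, mem_filter.mpr ⟨mem_univ _, hj⟩,
        mem_powersetCard.mpr ⟨hTA.trans sdiff_subset, hTcard⟩⟩
    obtain ⟨i, hiT, hine⟩ := G2 T hT𝒯 c hc
    have := hTA hiT
    rw [mem_sdiff] at this
    exact this.2 (mem_filter.mpr ⟨this.1, hine⟩)
  have P3 : ∀ c ∈ C, d - 1 ≤ (univ.filter fun i => x i ≠ c i).card := by
    intro c hc
    by_contra hcon
    push_neg at hcon
    have hA : n - d + 2 ≤ ((univ : Finset (Fin n)) \ (univ.filter fun i => x i ≠ c i)).card := by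
      rw [card_sdiff_of_subset (filter_subset _ _), card_univ, Fintype.card_fin]
      omega
    obtain ⟨T, hTA, hTcard⟩ := exists_subset_card_eq hA
    have hT𝒯 : T ∈ 𝒯 := mem_union_right _ (mem_powersetCard.mpr ⟨subset_univ _, hTcard⟩)
    obtain ⟨i, hiT, hine⟩ := G2 T hT𝒯 c hc
    have := hTA hiT
    rw [mem_sdiff] at this
    exact this.2 (mem_filter.mpr ⟨mem_univ _, hine⟩)
  -- the construction
  set Φ : (Fin n → F) →ₗ[F] (Fin (n+1) → F) :=
    { toFun := fun c => (Fin.snoc c 0 : Fin (n+1) → F)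
      map_add' := fun u u' => by rw [snoc_add, add_zero]
      map_smul' := fun a u => by rw [RingHom.id_apply, snoc_smul, mul_zero] } with hΦdef
  have hΦapp : ∀ c : Fin n → F, Φ c = (Fin.snoc c 0 : Fin (n+1) → F) := fun c => rfl
  set v : Fin (n+1) → F := (Fin.snoc x 1 : Fin (n+1) → F) with hvdef
  have hvlast : v (Fin.last n) = 1 := Fin.snoc_last _ _
  have hvne : v ≠ 0 := by
    intro hv
    have := congrFun hv (Fin.last n)
    rw [hvlast] at this
    simp at this
  set C' : Submodule F (Fin (n+1) → F) := Submodule.map Φ C ⊔ Submodule.span F {v} with hC'def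
  have hcomb : ∀ (c : Fin n → F) (a : F),
      Φ c + a • v = (Fin.snoc (c + a • x) a : Fin (n+1) → F) := by
    intro c a
    rw [hΦapp, hvdef, snoc_smul, mul_one, snoc_add, zero_add]
  have hmem : ∀ w, w ∈ C' ↔ ∃ c ∈ C, ∃ a : F, w = (Fin.snoc (c + a • x) a : Fin (n+1) → F) := by
    intro w
    rw [hC'def, Submodule.mem_sup]
    constructor
    · rintro ⟨y, hy, z, hz, rfl⟩
      obtain ⟨c, hc, rfl⟩ := Submodule.mem_map.mp hy
      obtain ⟨a, rfl⟩ := Submodule.mem_span_singleton.mp hz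
      exact ⟨c, hc, a, hcomb c a⟩
    · rintro ⟨c, hc, a, rfl⟩
      exact ⟨Φ c, Submodule.mem_map_of_mem hc, a • v,
        Submodule.smul_mem _ _ (Submodule.mem_span_singleton_self v), hcomb c a⟩
  -- finrank of C'
  have hΦinj : Function.Injective Φ := by
    intro c c' hcc
    funext i
    have := congrFun hcc (Fin.castSucc i)
    rwa [hΦapp, hΦapp, Fin.snoc_castSucc, Fin.snoc_castSucc] at this
  have hfrA : Module.finrank F (Submodule.map Φ C) = k := by
    rw [← hk]
    exact (LinearEquiv.finrank_eq (Submodule.equivMapOfInjective Φ hΦinj C)).symm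
  have hinf : Submodule.map Φ C ⊓ Submodule.span F {v} = ⊥ := by
    rw [eq_bot_iff]
    rintro w hw
    obtain ⟨hwA, hwB⟩ := Submodule.mem_inf.mp hw
    obtain ⟨a, rfl⟩ := Submodule.mem_span_singleton.mp hwB
    obtain ⟨c, hc, hce⟩ := Submodule.mem_map.mp hwA
    have ha : a = 0 := by
      have h1 := congrFun hce (Fin.last n)
      rw [hΦapp, Fin.snoc_last] at h1
      have h2 : (a • v) (Fin.last n) = a := by rw [Pi.smul_apply, hvlast, smul_eq_mul, mul_one]
      rw [h2] at h1
      exact h1.symm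
    rw [ha, zero_smul]
    exact Submodule.zero_mem ⊥
  have hfrC' : Module.finrank F C' = k + 1 := by
    have h1 := Submodule.finrank_sup_add_finrank_inf_eq (Submodule.map Φ C) (Submodule.span F {v})
    rw [hinf, finrank_bot, hfrA, finrank_span_singleton hvne] at h1
    rw [hC'def]
    omega
  -- the key locality lemma
  have key : ∀ jb, jb ∉ Dead → ∀ y : Fin (n+1),
      y ∉ (Sd jb).map Fin.castSuccEmb →
      (∀ c₁, c₁ ∈ C → ∀ c₂, c₂ ∈ C → ∀ a₁ a₂ : F, a₁ ≠ a₂ →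
        (Fin.snoc (c₁ + a₁ • x) a₁ : Fin (n+1) → F) y ≠ (Fin.snoc (c₂ + a₂ • x) a₂ : Fin (n+1) → F) y) →
      (∀ c₁, c₁ ∈ C → ∀ c₂, c₂ ∈ C → ∀ a : F,
        (Fin.snoc (c₁ + a • x) a : Fin (n+1) → F) y = (Fin.snoc (c₂ + a • x) a : Fin (n+1) → F) y) →
      ∀ w ∈ C', ∀ w' ∈ C',
        (∃ i ∈ insert y ((Sd jb).map Fin.castSuccEmb), w i ≠ w' i) →
        δ ≤ ((insert y ((Sd jb).map Fin.castSuccEmb)).filter fun i => w i ≠ w' i).card := by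
    intro jb hjb y hym hyne hyeq w hw w' hw' htrig
    obtain ⟨c₁, hc₁, a₁, rfl⟩ := (hmem w).mp hw
    obtain ⟨c₂, hc₂, a₂, rfl⟩ := (hmem w').mp hw'
    by_cases hA : a₁ = a₂
    · subst hA
      obtain ⟨i', hi'm, hi'ne⟩ := htrig
      rcases mem_insert.mp hi'm with hi'y | hi'map
      · exact absurd (by rw [hi'y]; exact hyeq c₁ hc₁ c₂ hc₂ a₁) hi'ne
      · obtain ⟨i, hiSd, rfl⟩ := mem_map.mp hi'map
        have hci : c₁ i ≠ c₂ i := by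
          intro hcon
          apply hi'ne
          show (Fin.snoc (c₁ + a₁ • x) a₁ : Fin (n+1) → F) i.castSucc
            = (Fin.snoc (c₂ + a₁ • x) a₁ : Fin (n+1) → F) i.castSucc
          rw [Fin.snoc_castSucc, Fin.snoc_castSucc, Pi.add_apply, Pi.add_apply, hcon]
        have h1 := hSloc jb c₁ hc₁ c₂ hc₂ ⟨i, hSdsub jb hiSd, hci⟩
        rw [hfiltersd (S jb) c₁ hc₁ c₂ hc₂] at h1
        refine le_trans h1 ?_
        apply card_le_card_of_injOn (fun i => Fin.castSucc i)
        · intro i2 hi2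
          obtain ⟨hi2Sd, hi2ne⟩ := mem_filter.mp hi2
          refine mem_filter.mpr ⟨mem_insert_of_mem (mem_map.mpr ⟨i2, hi2Sd, rfl⟩), ?_⟩
          show (Fin.snoc (c₁ + a₁ • x) a₁ : Fin (n+1) → F) i2.castSucc
            ≠ (Fin.snoc (c₂ + a₁ • x) a₁ : Fin (n+1) → F) i2.castSucc
          rw [Fin.snoc_castSucc, Fin.snoc_castSucc, Pi.add_apply, Pi.add_apply]
          intro hcon
          exact hi2ne (add_right_cancel hcon)
        · intro i2 _ i3 _ hcon
          exact Fin.castSucc_injective n hcon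
    · have hyP : (Fin.snoc (c₁ + a₁ • x) a₁ : Fin (n+1) → F) y
          ≠ (Fin.snoc (c₂ + a₂ • x) a₂ : Fin (n+1) → F) y := hyne c₁ hc₁ c₂ hc₂ a₁ a₂ hA
      set c2 : Fin n → F := (a₁ - a₂)⁻¹ • (c₂ - c₁) with hc2def
      have hc2C : c2 ∈ C := Submodule.smul_mem _ _ (sub_mem hc₂ hc₁)
      have hAne : a₁ - a₂ ≠ 0 := sub_ne_zero.mpr hA
      have hcard1 : (((Sd jb).map Fin.castSuccEmb).filter
            (fun i' => (Fin.snoc (c₁ + a₁ • x) a₁ : Fin (n+1) → F) i'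
              ≠ (Fin.snoc (c₂ + a₂ • x) a₂ : Fin (n+1) → F) i')).card
          = ((Sd jb).filter fun i => x i ≠ c2 i).card := by
        rw [filter_map, card_map]
        congr 1
        apply filter_congr
        intro i hi
        show ((Fin.snoc (c₁ + a₁ • x) a₁ : Fin (n+1) → F) i.castSucc
            ≠ (Fin.snoc (c₂ + a₂ • x) a₂ : Fin (n+1) → F) i.castSucc) ↔ _
        rw [Fin.snoc_castSucc, Fin.snoc_castSucc, Pi.add_apply, Pi.add_apply,
          Pi.smul_apply, Pi.smul_apply, smul_eq_mul, smul_eq_mul]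
        have hc2i : c2 i = (a₁ - a₂)⁻¹ * (c₂ i - c₁ i) := by
          rw [hc2def, Pi.smul_apply, Pi.sub_apply, smul_eq_mul]
        rw [hc2i, not_iff_not]
        constructor
        · intro hcon
          have h' : (a₁ - a₂) * x i = c₂ i - c₁ i := by linear_combination hcon
          rw [← h', inv_mul_cancel_left₀ hAne]
        · intro hcon
          have h' : (a₁ - a₂) * x i = c₂ i - c₁ i := by
            rw [hcon, mul_inv_cancel_left₀ hAne]
          linear_combination h'
      have hynotin : y ∉ (((Sd jb).map Fin.castSuccEmb).filter
            (fun i' => (Fin.snoc (c₁ + a₁ • x) a₁ : Fin (n+1) → F) i'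
              ≠ (Fin.snoc (c₂ + a₂ • x) a₂ : Fin (n+1) → F) i')) :=
        fun hcon => hym (mem_of_mem_filter _ hcon)
      rw [filter_insert, if_pos hyP, card_insert_of_notMem hynotin, hcard1]
      have h2 := P2 jb hjb c2 hc2C
      omega
  refine ⟨C', hfrC', ?_, ?_, ?_⟩
  · -- minimum distance lower bound
    intro w hw hwne
    obtain ⟨c, hc, a, rfl⟩ := (hmem w).mp hw
    by_cases ha : a = 0
    · subst ha
      rw [zero_smul, add_zero] at hwne ⊢
      have hcne : c ≠ 0 := by
        intro hc0
        apply hwne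
        rw [hc0]
        funext i
        refine Fin.lastCases ?_ (fun i => ?_) i <;> simp
      rw [hammingNorm_snoc, if_pos rfl, add_zero]
      exact hd c hc hcne
    · rw [hammingNorm_snoc, if_neg ha]
      set c2 : Fin n → F := (-a⁻¹) • c with hc2def
      have hc2C : c2 ∈ C := Submodule.smul_mem _ _ hc
      have heq : c + a • x = a • (x - c2) := by
        rw [hc2def, smul_sub, smul_smul, mul_neg, mul_inv_cancel₀ ha, neg_smul, one_smul,
          sub_neg_eq_add, add_comm]
      have hregular : ∀ i : Fin n, IsSMulRegular F a := by
        intro i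
        intro b1 b2 hb
        exact mul_left_cancel₀ ha (by simpa [smul_eq_mul] using hb)
      have hnorm2 : hammingNorm (c + a • x) = hammingNorm (x - c2) := by
        rw [heq, hammingNorm_smul hregular]
      have hnorm3 : hammingNorm (x - c2) = (univ.filter fun i => x i ≠ c2 i).card := by
        simp [hammingNorm, sub_ne_zero]
      have h3 := P3 c2 hc2C
      rw [hnorm2, hnorm3]
      omega
  · -- a codeword of weight exactly d
    refine ⟨(Fin.snoc w0 0 : Fin (n+1) → F), ?_, ?_, ?_⟩
    · exact (hmem _).mpr ⟨w0, hw0C, 0, by rw [zero_smul, add_zero]⟩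
    · intro hcon
      apply hw0ne
      funext i
      have := congrFun hcon i.castSucc
      rwa [Fin.snoc_castSucc] at this
    · rw [hammingNorm_snoc, if_pos rfl, add_zero, hw0d]
  · -- locality
    intro j'
    refine Fin.lastCases ?_ (fun j => ?_) j'
    · -- the new coordinate
      refine ⟨insert (Fin.last n) ((Sd j0).map Fin.castSuccEmb), mem_insert_self _ _, ?_, ?_⟩
      · calc (insert (Fin.last n) ((Sd j0).map Fin.castSuccEmb)).card
            ≤ ((Sd j0).map Fin.castSuccEmb).card + 1 := card_insert_le _ _
          _ = (Sd j0).card + 1 := by rw [card_map]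
          _ ≤ (r + δ - 1) + 1 := by
              have := le_trans (card_le_card (hSdsub j0)) (hScard j0)
              omega
          _ ≤ r + 1 + δ - 1 := by omega
      · apply key j0 hj0live
        · intro hcon
          obtain ⟨i, _, hieq⟩ := mem_map.mp hcon
          exact absurd hieq (ne_of_lt (Fin.castSucc_lt_last i))
        · intro c₁ hc₁ c₂ hc₂ a₁ a₂ hA
          show (Fin.snoc (c₁ + a₁ • x) a₁ : Fin (n+1) → F) (Fin.last n)
            ≠ (Fin.snoc (c₂ + a₂ • x) a₂ : Fin (n+1) → F) (Fin.last n)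
          rwa [Fin.snoc_last, Fin.snoc_last]
        · intro c₁ hc₁ c₂ hc₂ a
          show (Fin.snoc (c₁ + a • x) a : Fin (n+1) → F) (Fin.last n)
            = (Fin.snoc (c₂ + a • x) a : Fin (n+1) → F) (Fin.last n)
          rw [Fin.snoc_last, Fin.snoc_last]
    · by_cases hjd : j ∈ Dead
      · -- dead coordinate
        refine ⟨insert j.castSucc ((Sd j0).map Fin.castSuccEmb), mem_insert_self _ _, ?_, ?_⟩
        · calc (insert j.castSucc ((Sd j0).map Fin.castSuccEmb)).card
              ≤ ((Sd j0).map Fin.castSuccEmb).card + 1 := card_insert_le _ _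
            _ = (Sd j0).card + 1 := by rw [card_map]
            _ ≤ (r + δ - 1) + 1 := by
                have := le_trans (card_le_card (hSdsub j0)) (hScard j0)
                omega
            _ ≤ r + 1 + δ - 1 := by omega
        · apply key j0 hj0live
          · intro hcon
            obtain ⟨i, hiSd, hieq⟩ := mem_map.mp hcon
            have : i = j := Fin.castSucc_injective n hieq
            subst this
            exact (mem_sdiff.mp hiSd).2 hjd
          · intro c₁ hc₁ c₂ hc₂ a₁ a₂ hA
            show (Fin.snoc (c₁ + a₁ • x) a₁ : Fin (n+1) → F) j.castSucc
              ≠ (Fin.snoc (c₂ + a₂ • x) a₂ : Fin (n+1) → F) j.castSucc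
            rw [Fin.snoc_castSucc, Fin.snoc_castSucc, Pi.add_apply, Pi.add_apply,
              hDead0 j hjd c₁ hc₁, hDead0 j hjd c₂ hc₂, zero_add, zero_add,
              Pi.smul_apply, Pi.smul_apply, smul_eq_mul, smul_eq_mul]
            intro hcon
            exact hA (mul_right_cancel₀ (G1 j hjd) hcon)
          · intro c₁ hc₁ c₂ hc₂ a
            show (Fin.snoc (c₁ + a • x) a : Fin (n+1) → F) j.castSucc
              = (Fin.snoc (c₂ + a • x) a : Fin (n+1) → F) j.castSucc
            rw [Fin.snoc_castSucc, Fin.snoc_castSucc, Pi.add_apply, Pi.add_apply,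
              hDead0 j hjd c₁ hc₁, hDead0 j hjd c₂ hc₂]
      · -- live coordinate
        refine ⟨insert (Fin.last n) ((Sd j).map Fin.castSuccEmb),
          mem_insert_of_mem (mem_map.mpr ⟨j, mem_sdiff.mpr ⟨hjS j, hjd⟩, rfl⟩), ?_, ?_⟩
        · calc (insert (Fin.last n) ((Sd j).map Fin.castSuccEmb)).card
              ≤ ((Sd j).map Fin.castSuccEmb).card + 1 := card_insert_le _ _
            _ = (Sd j).card + 1 := by rw [card_map]
            _ ≤ (r + δ - 1) + 1 := by
                have := le_trans (card_le_card (hSdsub j)) (hScard j)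
                omega
            _ ≤ r + 1 + δ - 1 := by omega
        · apply key j hjd
          · intro hcon
            obtain ⟨i, _, hieq⟩ := mem_map.mp hcon
            exact absurd hieq (ne_of_lt (Fin.castSucc_lt_last i))
          · intro c₁ hc₁ c₂ hc₂ a₁ a₂ hA
            show (Fin.snoc (c₁ + a₁ • x) a₁ : Fin (n+1) → F) (Fin.last n)
              ≠ (Fin.snoc (c₂ + a₂ • x) a₂ : Fin (n+1) → F) (Fin.last n)
            rwa [Fin.snoc_last, Fin.snoc_last]
          · intro c₁ hc₁ c₂ hc₂ a
            show (Fin.snoc (c₁ + a • x) a : Fin (n+1) → F) (Fin.last n)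
              = (Fin.snoc (c₂ + a • x) a : Fin (n+1) → F) (Fin.last n)
            rw [Fin.snoc_last, Fin.snoc_last]
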